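/- Under a conformal β-change, the tensor K_{ijk} = [c_{ijk} − (h_{ij}M_k + h_{kj}M_i + h_{ki}M_j)]/L with M_i = c_i/(n+1) is σ-invariant: *K_{ijk} = e^σ K_{ijk}. -/
import Mathlib


/-- Under a conformal β-change, the tensor
`K_{ijk} = [c_{ijk} − (h_{ij}M_k + h_{kj}M_i + h_{ki}M_j)]/L` with `M_i = c_i/(n+1)`
is σ-invariant: `*K_{ijk} = e^σ K_{ijk}`. -/
theorem conformal_beta_change_K_invariant
    (n : ℕ) (c3 cs3 : Fin n → Fin n → Fin n → ℝ)
    (h hs : Fin n → Fin n → ℝ)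
    (c cs m : Fin n → ℝ)
    (σ L β Ls τ : ℝ)
    (hLs : Ls = Real.exp σ * L + β) (hL0 : L ≠ 0) (hLs0 : Ls ≠ 0)
    (hτ : τ = Real.exp σ * (Ls / L))
    (hcs3 : ∀ i j k, cs3 i j k =
      τ * (c3 i j k + (1 / (2 * Ls)) * (h i j * m k + h j k * m i + h k i * m j)))
    (hhs : ∀ i j, hs i j = τ * h i j)
    (hhsym : ∀ i j, h i j = h j i)
    (hcs : ∀ i, cs i = c i + (((n : ℝ) + 1) / (2 * Ls)) * m i)
    (M Ms : Fin n → ℝ)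
    (hM : ∀ i, M i = c i / ((n : ℝ) + 1))
    (hMs : ∀ i, Ms i = cs i / ((n : ℝ) + 1))
    (K Ks : Fin n → Fin n → Fin n → ℝ)
    (hK : ∀ i j k, K i j k =
      (c3 i j k - (h i j * M k + h k j * M i + h k i * M j)) / L)
    (hKs : ∀ i j k, Ks i j k =
      (cs3 i j k - (hs i j * Ms k + hs k j * Ms i + hs k i * Ms j)) / Ls) :
    ∀ i j k, Ks i j k = Real.exp σ * K i j k := by
  intro i j k
  have hn : ((n : ℝ) + 1) ≠ 0 := by positivity
  rw [hKs, hK, hcs3, hhs, hhs, hhs, hMs, hMs, hMs, hcs, hcs, hcs, hM, hM, hM, hτ,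
    hhsym j k, hhsym k i]
  field_simp
  ring
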